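/- The underlying random graph of a vertex-arc random digraph D(n,Ω,μ,φ) is the vertex-edge random graph G(n,Ω,μ,φ_u) with φ_u(x,y) = φ(x,y) + φ(y,x) − φ(x,y)φ(y,x): for every graph G with vertex set [n], Σ_{D : U(D)=G} ∫ ∏_{(i,j)∈A(D)} φ(x_i,x_j) · ∏_{(i,j)∉A(D), i≠j} (1−φ(x_i,x_j)) dμⁿ(x) = ∫ ∏_{ij∈E(G)} φ_u(x_i,x_j) · ∏_{ij∉E(G), i≠j} (1−φ_u(x_i,x_j)) dμⁿ(x). -/

import Mathlib

open MeasureTheory Finset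

lemma key {n : ℕ} (G : Finset (Sym2 (Fin n))) (a : Fin n × Fin n → ℝ)
    (Q : Finset (Fin n × Fin n)) (hQ : ∀ q ∈ Q, q.1 < q.2) :
    ∑ A ∈ (Q ∪ Q.image Prod.swap).powerset,
      (if ∀ q ∈ Q, ((q ∈ A ∨ q.swap ∈ A) ↔ Sym2.mk q.1 q.2 ∈ G) then
        ∏ p ∈ Q ∪ Q.image Prod.swap, (if p ∈ A then a p else 1 - a p) else 0)
    = ∏ q ∈ Q, (if Sym2.mk q.1 q.2 ∈ G then a q + a q.swap - a q * a q.swap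
        else (1 - a q) * (1 - a q.swap)) := by
  classical
  induction Q using Finset.induction_on with
  | empty => simp
  | @insert q Q hqQ ih =>
    have hq1 : q.1 < q.2 := hQ q (mem_insert_self _ _)
    have hQ' : ∀ q' ∈ Q, q'.1 < q'.2 := fun q' hq' => hQ q' (mem_insert_of_mem hq')
    set S0 := Q ∪ Q.image Prod.swap with hS0
    -- basic membership facts
    have hqS0 : q ∉ S0 := by
      simp only [hS0, mem_union, mem_image, not_or]
      refine ⟨hqQ, ?_⟩
      rintro ⟨r, hr, rfl⟩
      exact absurd hq1 (not_lt.2 (le_of_lt (hQ' r hr)))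
    have hqsS0 : q.swap ∉ S0 := by
      simp only [hS0, mem_union, mem_image, not_or]
      constructor
      · intro h; exact absurd (hQ' _ h) (not_lt.2 (le_of_lt hq1))
      · rintro ⟨r, hr, hrs⟩
        exact hqQ (Prod.swap_injective hrs ▸ hr)
    have hqswapne : q ≠ q.swap := by
      intro h
      have := congrArg Prod.fst h
      simp at this
      omega
    have hset : insert q Q ∪ (insert q Q).image Prod.swap
        = insert q (insert q.swap S0) := by
      rw [image_insert, hS0]
      ext p
      simp only [mem_union, mem_insert, mem_image]
      tauto
    have hqnotin : q ∉ insert q.swap S0 := by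
      simp only [mem_insert, not_or]; exact ⟨hqswapne, hqS0⟩
    rw [hset, Finset.sum_powerset_insert hqnotin,
      Finset.sum_powerset_insert hqsS0, Finset.sum_powerset_insert hqsS0,
      ← Finset.sum_add_distrib, ← Finset.sum_add_distrib, ← Finset.sum_add_distrib,
      Finset.prod_insert hqQ, ← ih hQ', Finset.mul_sum]
    refine Finset.sum_congr rfl fun t ht => ?_
    have ht' : t ⊆ S0 := mem_powerset.1 ht
    have hqt : q ∉ t := fun h => hqS0 (ht' h)
    have hqst : q.swap ∉ t := fun h => hqsS0 (ht' h)
    have hgen : ∀ A : Finset (Fin n × Fin n), (∀ p ∈ S0, (p ∈ A ↔ p ∈ t)) →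
        ((∀ q' ∈ Q, ((q' ∈ A ∨ q'.swap ∈ A) ↔ Sym2.mk q'.1 q'.2 ∈ G)) ↔
          (∀ q' ∈ Q, ((q' ∈ t ∨ q'.swap ∈ t) ↔ Sym2.mk q'.1 q'.2 ∈ G))) ∧
        (∏ p ∈ S0, (if p ∈ A then a p else 1 - a p))
          = ∏ p ∈ S0, (if p ∈ t then a p else 1 - a p) := by
      intro A hA
      constructor
      · refine forall₂_congr fun q' hq' => ?_
        rw [hA q' (mem_union_left _ hq'),
          hA q'.swap (mem_union_right _ (mem_image_of_mem _ hq'))]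
      · exact Finset.prod_congr rfl fun p hp => if_congr (hA p hp) rfl rfl
    have h2 := hgen (insert q.swap t)
      (fun p hp => by simp [Finset.mem_insert, ne_of_mem_of_not_mem hp hqsS0])
    have h3 := hgen (insert q t)
      (fun p hp => by simp [Finset.mem_insert, ne_of_mem_of_not_mem hp hqS0])
    have h4 := hgen (insert q (insert q.swap t))
      (fun p hp => by simp [Finset.mem_insert, ne_of_mem_of_not_mem hp hqS0,
        ne_of_mem_of_not_mem hp hqsS0])
    have hqi1 : q ∉ insert q.swap t := by
      simp only [Finset.mem_insert, not_or]; exact ⟨hqswapne, hqt⟩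
    have hqsi3 : q.swap ∉ insert q t := by
      simp only [Finset.mem_insert, not_or]; exact ⟨Ne.symm hqswapne, hqst⟩
    simp only [Finset.prod_insert hqnotin, Finset.prod_insert hqsS0, h2.2, h3.2, h4.2,
      if_neg hqt, if_neg hqst, if_neg hqi1, if_pos (Finset.mem_insert_self q t),
      if_pos (Finset.mem_insert_self q.swap t), if_neg hqsi3,
      if_pos (Finset.mem_insert_self q (insert q.swap t)),
      if_pos (Finset.mem_insert_of_mem (Finset.mem_insert_self q.swap t)
        : q.swap ∈ insert q (insert q.swap t))]
    by_cases hP0 : ∀ q' ∈ Q, ((q' ∈ t ∨ q'.swap ∈ t) ↔ Sym2.mk q'.1 q'.2 ∈ G)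
    · by_cases hg : Sym2.mk q.1 q.2 ∈ G
      · have c1 : ¬ ∀ q' ∈ insert q Q, ((q' ∈ t ∨ q'.swap ∈ t) ↔ Sym2.mk q'.1 q'.2 ∈ G) := by
          intro h
          rcases (h q (mem_insert_self _ _)).mpr hg with h' | h'
          exacts [hqt h', hqst h']
        have c2 : ∀ q' ∈ insert q Q,
            ((q' ∈ insert q.swap t ∨ q'.swap ∈ insert q.swap t) ↔ Sym2.mk q'.1 q'.2 ∈ G) :=
          (Finset.forall_mem_insert ..).mpr
            ⟨iff_of_true (Or.inr (mem_insert_self _ _)) hg, h2.1.mpr hP0⟩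
        have c3 : ∀ q' ∈ insert q Q,
            ((q' ∈ insert q t ∨ q'.swap ∈ insert q t) ↔ Sym2.mk q'.1 q'.2 ∈ G) :=
          (Finset.forall_mem_insert ..).mpr
            ⟨iff_of_true (Or.inl (mem_insert_self _ _)) hg, h3.1.mpr hP0⟩
        have c4 : ∀ q' ∈ insert q Q,
            ((q' ∈ insert q (insert q.swap t) ∨ q'.swap ∈ insert q (insert q.swap t)) ↔
              Sym2.mk q'.1 q'.2 ∈ G) :=
          (Finset.forall_mem_insert ..).mpr
            ⟨iff_of_true (Or.inl (mem_insert_self _ _)) hg, h4.1.mpr hP0⟩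
        rw [if_neg c1, if_pos c2, if_pos c3, if_pos c4, if_pos hg, if_pos hP0]
        ring
      · have c1 : ∀ q' ∈ insert q Q, ((q' ∈ t ∨ q'.swap ∈ t) ↔ Sym2.mk q'.1 q'.2 ∈ G) :=
          (Finset.forall_mem_insert ..).mpr
            ⟨iff_of_false (fun h => h.elim hqt hqst) hg, hP0⟩
        have c2 : ¬ ∀ q' ∈ insert q Q,
            ((q' ∈ insert q.swap t ∨ q'.swap ∈ insert q.swap t) ↔ Sym2.mk q'.1 q'.2 ∈ G) :=
          fun h => hg ((h q (mem_insert_self _ _)).mp (Or.inr (mem_insert_self _ _)))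
        have c3 : ¬ ∀ q' ∈ insert q Q,
            ((q' ∈ insert q t ∨ q'.swap ∈ insert q t) ↔ Sym2.mk q'.1 q'.2 ∈ G) :=
          fun h => hg ((h q (mem_insert_self _ _)).mp (Or.inl (mem_insert_self _ _)))
        have c4 : ¬ ∀ q' ∈ insert q Q,
            ((q' ∈ insert q (insert q.swap t) ∨ q'.swap ∈ insert q (insert q.swap t)) ↔
              Sym2.mk q'.1 q'.2 ∈ G) :=
          fun h => hg ((h q (mem_insert_self _ _)).mp (Or.inl (mem_insert_self _ _)))
        rw [if_pos c1, if_neg c2, if_neg c3, if_neg c4, if_neg hg, if_pos hP0]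
        ring
    · have c1 : ¬ ∀ q' ∈ insert q Q, ((q' ∈ t ∨ q'.swap ∈ t) ↔ Sym2.mk q'.1 q'.2 ∈ G) :=
        fun h => hP0 fun q' hq' => h q' (mem_insert_of_mem hq')
      have c2 : ¬ ∀ q' ∈ insert q Q,
          ((q' ∈ insert q.swap t ∨ q'.swap ∈ insert q.swap t) ↔ Sym2.mk q'.1 q'.2 ∈ G) :=
        fun h => hP0 (h2.1.mp fun q' hq' => h q' (mem_insert_of_mem hq'))
      have c3 : ¬ ∀ q' ∈ insert q Q,
          ((q' ∈ insert q t ∨ q'.swap ∈ insert q t) ↔ Sym2.mk q'.1 q'.2 ∈ G) :=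
        fun h => hP0 (h3.1.mp fun q' hq' => h q' (mem_insert_of_mem hq'))
      have c4 : ¬ ∀ q' ∈ insert q Q,
          ((q' ∈ insert q (insert q.swap t) ∨ q'.swap ∈ insert q (insert q.swap t)) ↔
            Sym2.mk q'.1 q'.2 ∈ G) :=
        fun h => hP0 (h4.1.mp fun q' hq' => h q' (mem_insert_of_mem hq'))
      rw [if_neg c1, if_neg c2, if_neg c3, if_neg c4, if_neg hP0]
      ring

lemma pointwise {n : ℕ} (G : Finset (Sym2 (Fin n))) (hG : ∀ e ∈ G, ¬ e.IsDiag)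
    (a : Fin n × Fin n → ℝ) :
    ∑ A ∈ Finset.univ.filter (fun A : Finset (Fin n × Fin n) =>
        (∀ p ∈ A, p.1 ≠ p.2) ∧ A.image (fun p : Fin n × Fin n => Sym2.mk p.1 p.2) = G),
      ((∏ p ∈ A, a p) *
        ∏ p ∈ Finset.univ.filter (fun p : Fin n × Fin n => p.1 ≠ p.2 ∧ p ∉ A), (1 - a p))
    = (∏ p ∈ Finset.univ.filter (fun p : Fin n × Fin n =>
          p.1 < p.2 ∧ Sym2.mk p.1 p.2 ∈ G), (a p + a p.swap - a p * a p.swap)) *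
      ∏ p ∈ Finset.univ.filter (fun p : Fin n × Fin n =>
          p.1 < p.2 ∧ Sym2.mk p.1 p.2 ∉ G), ((1 - a p) * (1 - a p.swap)) := by
  classical
  set Q : Finset (Fin n × Fin n) := univ.filter fun p => p.1 < p.2 with hQdef
  have hQ : ∀ q ∈ Q, q.1 < q.2 := fun q hq => (mem_filter.1 hq).2
  have hS0 : Q ∪ Q.image Prod.swap = univ.filter fun p : Fin n × Fin n => p.1 ≠ p.2 := by
    ext p
    simp only [hQdef, Finset.mem_union, Finset.mem_image, Finset.mem_filter,
      Finset.mem_univ, true_and]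
    constructor
    · rintro (h | ⟨r, hr, rfl⟩)
      · exact ne_of_lt h
      · exact (ne_of_lt hr).symm
    · intro h
      rcases lt_or_gt_of_ne h with h' | h'
      · exact Or.inl h'
      · exact Or.inr ⟨p.swap, h', Prod.swap_swap p⟩
  have hswapmk : ∀ p : Fin n × Fin n, Sym2.mk p.swap.1 p.swap.2 = Sym2.mk p.1 p.2 := by
    rintro ⟨i, j⟩; exact Sym2.eq_swap
  have hset : Finset.univ.filter (fun A : Finset (Fin n × Fin n) =>
        (∀ p ∈ A, p.1 ≠ p.2) ∧ A.image (fun p : Fin n × Fin n => Sym2.mk p.1 p.2) = G)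
      = (Q ∪ Q.image Prod.swap).powerset.filter
          (fun A => ∀ q ∈ Q, ((q ∈ A ∨ q.swap ∈ A) ↔ Sym2.mk q.1 q.2 ∈ G)) := by
    ext A
    simp only [Finset.mem_filter, Finset.mem_univ, true_and, Finset.mem_powerset, hS0]
    constructor
    · rintro ⟨hne, himg⟩
      refine ⟨fun p hp => mem_filter.2 ⟨mem_univ _, hne p hp⟩, fun q hq => ?_⟩
      constructor
      · rintro (h | h)
        · rw [← himg]; exact mem_image_of_mem _ h
        · rw [← himg, ← hswapmk q]; exact mem_image_of_mem _ h
      · intro hmem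
        rw [← himg] at hmem
        rcases mem_image.1 hmem with ⟨p, hpA, hpq⟩
        rcases Sym2.mk_eq_mk_iff.1 hpq with h | h
        · exact Or.inl (h ▸ hpA)
        · exact Or.inr (h ▸ hpA)
    · rintro ⟨hsub, hcond⟩
      have hne : ∀ p ∈ A, p.1 ≠ p.2 := fun p hp => (mem_filter.1 (hsub hp)).2
      refine ⟨hne, Finset.Subset.antisymm ?_ ?_⟩
      · intro e he
        rcases mem_image.1 he with ⟨p, hpA, rfl⟩
        rcases lt_or_gt_of_ne (hne p hpA) with h | h
        · exact (hcond p (mem_filter.2 ⟨mem_univ _, h⟩)).mp (Or.inl hpA)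
        · have hx := (hcond p.swap (mem_filter.2 ⟨mem_univ _, h⟩)).mp
            (Or.inr (by rwa [Prod.swap_swap]))
          rwa [hswapmk p] at hx
      · intro e he
        obtain ⟨p, rfl⟩ : ∃ p : Fin n × Fin n, Sym2.mk p.1 p.2 = e := ⟨e.out, e.out_eq⟩
        have hpne : p.1 ≠ p.2 := by
          intro h
          exact hG _ he (by rcases p with ⟨i, j⟩; exact Sym2.mk_isDiag_iff.2 h)
        rcases lt_or_gt_of_ne hpne with h | h
        · rcases (hcond p (mem_filter.2 ⟨mem_univ _, h⟩)).mpr he with h' | h'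
          · exact mem_image_of_mem _ h'
          · rw [← hswapmk p]; exact mem_image_of_mem _ h'
        · have hsw : Sym2.mk p.swap.1 p.swap.2 ∈ G := by rwa [hswapmk p]
          rcases (hcond p.swap (mem_filter.2 ⟨mem_univ _, h⟩)).mpr hsw with h' | h'
          · rw [← hswapmk p]; exact mem_image_of_mem _ h'
          · rw [Prod.swap_swap] at h'; exact mem_image_of_mem _ h'
  rw [hset, Finset.sum_filter]
  have hsummand : ∀ A ∈ (Q ∪ Q.image Prod.swap).powerset,
      (if (∀ q ∈ Q, ((q ∈ A ∨ q.swap ∈ A) ↔ Sym2.mk q.1 q.2 ∈ G)) then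
        (∏ p ∈ A, a p) *
          ∏ p ∈ Finset.univ.filter (fun p : Fin n × Fin n => p.1 ≠ p.2 ∧ p ∉ A), (1 - a p)
        else 0)
      = (if (∀ q ∈ Q, ((q ∈ A ∨ q.swap ∈ A) ↔ Sym2.mk q.1 q.2 ∈ G)) then
          ∏ p ∈ Q ∪ Q.image Prod.swap, (if p ∈ A then a p else 1 - a p) else 0) := by
    intro A hA
    have hAsub : A ⊆ Q ∪ Q.image Prod.swap := mem_powerset.1 hA
    refine if_congr Iff.rfl ?_ rfl
    have hfilter : Finset.univ.filter (fun p : Fin n × Fin n => p.1 ≠ p.2 ∧ p ∉ A)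
        = (Q ∪ Q.image Prod.swap) \ A := by
      rw [hS0]
      ext p
      simp only [Finset.mem_sdiff, Finset.mem_filter, Finset.mem_univ, true_and, and_assoc]
    rw [hfilter, ← Finset.prod_sdiff hAsub (f := fun p => if p ∈ A then a p else 1 - a p),
      mul_comm]
    congr 1
    · exact Finset.prod_congr rfl fun p hp => (if_neg (Finset.mem_sdiff.1 hp).2).symm
    · exact Finset.prod_congr rfl fun p hp => (if_pos hp).symm
  rw [Finset.sum_congr rfl hsummand, key G a Q hQ, Finset.prod_ite]
  simp only [hQdef, Finset.filter_filter, Prod.mk.eta]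

/-- The probability that the vertex-arc random digraph `D(n, Ω, μ, φ)` equals the digraph
with arc set `A`. -/
noncomputable def vardP {Ω : Type*} [MeasurableSpace Ω] (μ : Measure Ω) {n : ℕ}
    (φ : Ω → Ω → ℝ) (A : Finset (Fin n × Fin n)) : ℝ :=
  ∫ x : Fin n → Ω,
    (∏ p ∈ A, φ (x p.1) (x p.2)) *
      ∏ p ∈ Finset.univ.filter (fun p : Fin n × Fin n => p.1 ≠ p.2 ∧ p ∉ A),
        (1 - φ (x p.1) (x p.2)) ∂(Measure.pi fun _ : Fin n => μ)

/-- The underlying random graph of the vertex-arc random digraph `D(n, Ω, μ, φ)` is the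
vertex-edge random graph `G(n, Ω, μ, φ_u)` with
`φ_u(x,y) = φ(x,y) + φ(y,x) - φ(x,y)φ(y,x)`: for every loopless graph `G` on `[n]`, summing
the VARD probabilities over all digraphs whose underlying graph is `G` gives the VERG
probability of `G`. -/
theorem stmt16 {n : ℕ} {Ω : Type*} [MeasurableSpace Ω] (μ : Measure Ω)
    [IsProbabilityMeasure μ] (φ : Ω → Ω → ℝ) (hmeas : Measurable (Function.uncurry φ))
    (hφ : ∀ x y, φ x y ∈ Set.Icc (0 : ℝ) 1)
    (φu : Ω → Ω → ℝ) (hφu : ∀ x y, φu x y = φ x y + φ y x - φ x y * φ y x)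
    (G : Finset (Sym2 (Fin n))) (hG : ∀ e ∈ G, ¬ e.IsDiag) :
    ∑ A ∈ Finset.univ.filter (fun A : Finset (Fin n × Fin n) =>
        (∀ p ∈ A, p.1 ≠ p.2) ∧ A.image (fun p : Fin n × Fin n => Sym2.mk p.1 p.2) = G),
      vardP μ φ A =
    ∫ x : Fin n → Ω,
      (∏ p ∈ Finset.univ.filter (fun p : Fin n × Fin n =>
          p.1 < p.2 ∧ Sym2.mk p.1 p.2 ∈ G), φu (x p.1) (x p.2)) *
        ∏ p ∈ Finset.univ.filter (fun p : Fin n × Fin n =>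
            p.1 < p.2 ∧ Sym2.mk p.1 p.2 ∉ G), (1 - φu (x p.1) (x p.2))
        ∂(Measure.pi fun _ : Fin n => μ) := by
  classical
  have hmp : ∀ p : Fin n × Fin n, Measurable fun x : Fin n → Ω => φ (x p.1) (x p.2) :=
    fun p => by
      have h : Measurable fun a : Fin n → Ω => (a p.1, a p.2) :=
        (measurable_pi_apply p.1).prodMk (measurable_pi_apply p.2)
      exact hmeas.comp h
  have hintegrand : ∀ A : Finset (Fin n × Fin n),
      Integrable (fun x : Fin n → Ω => (∏ p ∈ A, φ (x p.1) (x p.2)) *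
          ∏ p ∈ Finset.univ.filter (fun p : Fin n × Fin n => p.1 ≠ p.2 ∧ p ∉ A),
            (1 - φ (x p.1) (x p.2)))
        (Measure.pi fun _ : Fin n => μ) := by
    intro A
    have hm1 : Measurable fun x : Fin n → Ω => ∏ p ∈ A, φ (x p.1) (x p.2) :=
      Finset.measurable_prod _ fun p _ => hmp p
    have hm2 : Measurable fun x : Fin n → Ω =>
        ∏ p ∈ Finset.univ.filter (fun p : Fin n × Fin n => p.1 ≠ p.2 ∧ p ∉ A),
          (1 - φ (x p.1) (x p.2)) :=
      Finset.measurable_prod _ fun p _ => measurable_const.sub (hmp p)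
    refine (integrable_const (1 : ℝ)).mono' (hm1.mul hm2).aestronglyMeasurable
      (ae_of_all _ fun x => ?_)
    have hb1 : (0:ℝ) ≤ ∏ p ∈ A, φ (x p.1) (x p.2) :=
      Finset.prod_nonneg fun p _ => (hφ _ _).1
    have hb1' : ∏ p ∈ A, φ (x p.1) (x p.2) ≤ 1 :=
      Finset.prod_le_one (fun p _ => (hφ _ _).1) (fun p _ => (hφ _ _).2)
    have hb2 : (0:ℝ) ≤ ∏ p ∈ Finset.univ.filter
        (fun p : Fin n × Fin n => p.1 ≠ p.2 ∧ p ∉ A), (1 - φ (x p.1) (x p.2)) :=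
      Finset.prod_nonneg fun p _ => by have := (hφ (x p.1) (x p.2)).2; linarith
    have hb2' : ∏ p ∈ Finset.univ.filter
        (fun p : Fin n × Fin n => p.1 ≠ p.2 ∧ p ∉ A), (1 - φ (x p.1) (x p.2)) ≤ 1 :=
      Finset.prod_le_one (fun p _ => by have := (hφ (x p.1) (x p.2)).2; linarith)
        (fun p _ => by have := (hφ (x p.1) (x p.2)).1; linarith)
    rw [Real.norm_eq_abs, abs_of_nonneg (mul_nonneg hb1 hb2)]
    calc (∏ p ∈ A, φ (x p.1) (x p.2)) * _ ≤ 1 * 1 := by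
          exact mul_le_mul hb1' hb2' hb2 zero_le_one
      _ = 1 := mul_one 1
  simp only [vardP]
  rw [← integral_finset_sum _ (fun A _ => hintegrand A)]
  refine integral_congr_ae (ae_of_all _ fun x => ?_)
  beta_reduce
  rw [pointwise G hG (fun p => φ (x p.1) (x p.2))]
  congr 1
  · exact Finset.prod_congr rfl fun p _ => by
      simp only [hφu, Prod.fst_swap, Prod.snd_swap]
  · exact Finset.prod_congr rfl fun p _ => by
      simp only [hφu, Prod.fst_swap, Prod.snd_swap]; ring
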